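/- Let a, b ∈ (0,1) and α, α', β, β' ∈ ℝ with α ≠ α' and β ≠ β'. Suppose x, y, m ∈ ℝ and g, h ∈ ℂ satisfy: g ∉ ℝ, h ∉ ℝ, |g| = |h|, and the two equations (x−α)(x−α')·g² + ((x−α)(m−(1−a)) + (x−α')(m−a))·g + (m² − m) = 0 and (y−β)(y−β')·h² − ((y−β)(m−b) + (y−β')(m−(1−b)))·h + (m² − m) = 0. Then (x−α)(x−α') = (y−β)(y−β'), min(α,α') < x < max(α,α'), and min(β,β') < y < max(β,β'). In particular z = x + iy lies on the hyperbola {x+iy : (x−(α+α')/2)² − (y−(β+β')/2)² = ((α'−α)² − (β'−β)²)/4} and in the open rectangle (min(α,α'), max(α,α')) × (min(β,β'), max(β,β')). -/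

import Mathlib

open Set

lemma quad_aux (A B C : ℝ) (g : ℂ) (hg : g.im ≠ 0)
    (e : (A : ℂ) * g ^ 2 + (B : ℂ) * g + (C : ℂ) = 0) :
    B = -(2 * A * g.re) ∧ C = A * (g.re ^ 2 + g.im ^ 2) := by
  rw [Complex.ext_iff] at e
  simp [Complex.add_re, Complex.add_im, Complex.mul_re, Complex.mul_im, pow_two] at e
  obtain ⟨hre, him⟩ := e
  have key : 2 * A * g.re + B = 0 := by
    rcases mul_eq_zero.mp (show (2 * A * g.re + B) * g.im = 0 by linear_combination him) with h | h
    · exact h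
    · exact absurd h hg
  constructor
  · linarith
  · linear_combination hre - g.re * key

lemma between_of_mul_neg {x α α' : ℝ} (h : (x - α) * (x - α') < 0) :
    x ∈ Set.Ioo (min α α') (max α α') := by
  constructor
  · by_contra hx
    push_neg at hx
    have h1 : x ≤ α := le_trans hx (min_le_left α α')
    have h2 : x ≤ α' := le_trans hx (min_le_right α α')
    nlinarith
  · by_contra hx
    push_neg at hx
    have h1 : α ≤ x := le_trans (le_max_left α α') hx
    have h2 : α' ≤ x := le_trans (le_max_right α α') hx
    nlinarith

set_option maxHeartbeats 1000000 in
theorem stmt10 (a b α α' β β' x y m : ℝ)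
    (ha : a ∈ Ioo (0 : ℝ) 1) (hb : b ∈ Ioo (0 : ℝ) 1) (hαα : α ≠ α') (hββ : β ≠ β')
    (g h : ℂ) (hg : g.im ≠ 0) (hh : h.im ≠ 0)
    (habs : ‖g‖ = ‖h‖)
    (e1 : (((x - α) * (x - α') : ℝ) : ℂ) * g ^ 2 +
        (((x - α) * (m - (1 - a)) + (x - α') * (m - a) : ℝ) : ℂ) * g +
        ((m ^ 2 - m : ℝ) : ℂ) = 0)
    (e2 : (((y - β) * (y - β') : ℝ) : ℂ) * h ^ 2 -
        (((y - β) * (m - b) + (y - β') * (m - (1 - b)) : ℝ) : ℂ) * h +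
        ((m ^ 2 - m : ℝ) : ℂ) = 0) :
    (x - α) * (x - α') = (y - β) * (y - β')
    ∧ x ∈ Ioo (min α α') (max α α')
    ∧ y ∈ Ioo (min β β') (max β β')
    ∧ (x - (α + α') / 2) ^ 2 - (y - (β + β') / 2) ^ 2 = ((α' - α) ^ 2 - (β' - β) ^ 2) / 4 := by
  obtain ⟨hB1, hC1⟩ := quad_aux _ _ _ g hg e1
  have e2' : (((y - β) * (y - β') : ℝ) : ℂ) * h ^ 2 +
      ((-((y - β) * (m - b) + (y - β') * (m - (1 - b))) : ℝ) : ℂ) * h +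
      ((m ^ 2 - m : ℝ) : ℂ) = 0 := by
    push_cast
    push_cast at e2
    linear_combination e2
  obtain ⟨hB2, hC2⟩ := quad_aux _ _ _ h hh e2'
  -- |g|^2 = |h|^2
  have hS : g.re ^ 2 + g.im ^ 2 = h.re ^ 2 + h.im ^ 2 := by
    have := congrArg (· ^ 2) habs
    simp only [Complex.sq_norm, Complex.normSq_apply] at this
    nlinarith [this]
  have hSpos : 0 < g.re ^ 2 + g.im ^ 2 := by positivity
  -- A ≠ 0 (for x); similarly for y
  have hAx : (x - α) * (x - α') ≠ 0 := by
    intro h0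
    have hC0 : m ^ 2 - m = 0 := by rw [hC1, h0]; ring
    have hB0 : (x - α) * (m - (1 - a)) + (x - α') * (m - a) = 0 := by
      rw [hB1, h0]; ring
    rcases mul_eq_zero.mp h0 with hx0 | hx0
    · have hαne : x - α' ≠ 0 := by
        intro hz; apply hαα; linarith [sub_eq_zero.mp hx0, sub_eq_zero.mp hz]
      have hma : m = a := by
        have : (x - α') * (m - a) = 0 := by linear_combination hB0 - (m - (1 - a)) * hx0
        rcases mul_eq_zero.mp this with hz | hz
        · exact absurd hz hαne
        · linarith
      nlinarith [ha.1, ha.2]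
    · have hαne : x - α ≠ 0 := by
        intro hz; apply hαα; linarith [sub_eq_zero.mp hx0, sub_eq_zero.mp hz]
      have hma : m = 1 - a := by
        have : (x - α) * (m - (1 - a)) = 0 := by linear_combination hB0 - (m - a) * hx0
        rcases mul_eq_zero.mp this with hz | hz
        · exact absurd hz hαne
        · linarith
      nlinarith [ha.1, ha.2]
  have hAy : (y - β) * (y - β') ≠ 0 := by
    intro h0
    have hC0 : m ^ 2 - m = 0 := by rw [hC2, h0]; ring
    have hB0 : (y - β) * (m - b) + (y - β') * (m - (1 - b)) = 0 := by
      have := hB2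
      rw [h0] at this
      linarith [this]
    rcases mul_eq_zero.mp h0 with hy0 | hy0
    · have hβne : y - β' ≠ 0 := by
        intro hz; apply hββ; linarith [sub_eq_zero.mp hy0, sub_eq_zero.mp hz]
      have hmb : m = 1 - b := by
        have : (y - β') * (m - (1 - b)) = 0 := by linear_combination hB0 - (m - b) * hy0
        rcases mul_eq_zero.mp this with hz | hz
        · exact absurd hz hβne
        · linarith
      nlinarith [hb.1, hb.2]
    · have hβne : y - β ≠ 0 := by
        intro hz; apply hββ; linarith [sub_eq_zero.mp hy0, sub_eq_zero.mp hz]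
      have hmb : m = b := by
        have : (y - β) * (m - b) = 0 := by linear_combination hB0 - (m - (1 - b)) * hy0
        rcases mul_eq_zero.mp this with hz | hz
        · exact absurd hz hβne
        · linarith
      nlinarith [hb.1, hb.2]
  -- main equality
  have hmain : (x - α) * (x - α') = (y - β) * (y - β') := by
    have hC1' := hC1
    rw [hS] at hC1'
    have h1 : (x - α) * (x - α') * (h.re ^ 2 + h.im ^ 2) =
        (y - β) * (y - β') * (h.re ^ 2 + h.im ^ 2) := by
      linarith [hC1', hC2]
    have hSpos' : (0:ℝ) < h.re ^ 2 + h.im ^ 2 := by rw [← hS]; exact hSpos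
    exact mul_right_cancel₀ (ne_of_gt hSpos') h1
  -- discriminant negativity ⇒ between
  have hgim2 : 0 < ((x - α) * (x - α')) ^ 2 * g.im ^ 2 := by positivity
  have hhim2 : 0 < ((y - β) * (y - β')) ^ 2 * h.im ^ 2 := by positivity
  have hdiscx : ((x - α) * (m - (1 - a)) + (x - α') * (m - a)) ^ 2
      - 4 * ((x - α) * (x - α')) * (m ^ 2 - m)
      = -4 * ((x - α) * (x - α')) ^ 2 * g.im ^ 2 := by
    rw [hB1, hC1]; ring
  have hidentx : ((x - α) * (m - (1 - a)) + (x - α') * (m - a)) ^ 2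
      - 4 * ((x - α) * (x - α')) * (m ^ 2 - m)
      = ((x - α) * (m - (1 - a)) - (x - α') * (m - a)) ^ 2
        + 4 * (a * (1 - a)) * ((x - α) * (x - α')) := by ring
  have hxneg : (x - α) * (x - α') < 0 := by
    nlinarith [sq_nonneg ((x - α) * (m - (1 - a)) - (x - α') * (m - a)),
      mul_pos ha.1 (show (0:ℝ) < 1 - a by linarith [ha.2]), hgim2, hdiscx, hidentx]
  have hdiscy : ((y - β) * (m - b) + (y - β') * (m - (1 - b))) ^ 2
      - 4 * ((y - β) * (y - β')) * (m ^ 2 - m)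
      = -4 * ((y - β) * (y - β')) ^ 2 * h.im ^ 2 := by
    have hB2' : (y - β) * (m - b) + (y - β') * (m - (1 - b)) =
        2 * ((y - β) * (y - β')) * h.re := by linarith [hB2]
    rw [hB2', hC2]; ring
  have hidenty : ((y - β) * (m - b) + (y - β') * (m - (1 - b))) ^ 2
      - 4 * ((y - β) * (y - β')) * (m ^ 2 - m)
      = ((y - β) * (m - b) - (y - β') * (m - (1 - b))) ^ 2
        + 4 * (b * (1 - b)) * ((y - β) * (y - β')) := by ring
  have hyneg : (y - β) * (y - β') < 0 := by
    nlinarith [sq_nonneg ((y - β) * (m - b) - (y - β') * (m - (1 - b))),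
      mul_pos hb.1 (show (0:ℝ) < 1 - b by linarith [hb.2]), hhim2, hdiscy, hidenty]
  refine ⟨hmain, between_of_mul_neg hxneg, between_of_mul_neg hyneg, ?_⟩
  linear_combination hmain
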